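/- arXiv:2402.00686 — 3 statements merged into one kernel-verified Lean document; each statement's English description precedes it below -/
import Mathlib

section
/- Let ν > 0, μ ≥ 1 with μ > ν/2 − 1, σ > 0, γ₀ > 0, ρ > 0, set γ := γ₀σ and C₀ := γ²(T*T)^μ, and assume φ ≠ 0 and Φ_MAP ≠ 0. Suppose u† = (T*T)^{ν/2}w for some w ∈ X with ‖w‖_X ≤ ρ, and suppose ⟨u†, φ⟩_X ≥ 2ργ₀^{−ν/(μ+1)}‖φ‖_X. Then (ρ‖(T*T)^{ν/2}(T*Φ_MAP − φ)‖_X − ⟨Φ_MAP, Tu†⟩_Y)/‖Φ_MAP‖_Y ≤ −(⟨u†, φ⟩_X/‖φ‖_X − 2ργ₀^{−ν/(μ+1)})/γ₀^{1/(μ+1)}. -/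
open scoped RealInnerProductSpace

set_option synthInstance.maxHeartbeats 1000000
set_option maxHeartbeats 1000000



section ObjBoundAux

lemma objb_comm_of_inv {M : Type*} [Monoid M] {b m c : M}
    (h1 : b * m = 1) (h2 : m * b = 1) (h3 : c * m = m * c) : b * c = c * b := by
  calc b * c = b * c * (m * b) := by rw [h2, mul_one]
  _ = b * (c * m) * b := by simp only [mul_assoc]
  _ = b * (m * c) * b := by rw [h3]
  _ = (b * m) * (c * b) := by simp only [mul_assoc]
  _ = c * b := by rw [h1, one_mul]

lemma objb_interp_dyadic {g : ℝ → ℝ} (hg : ∀ t, 0 < g t)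
    (hmid : ∀ s t : ℝ, 0 ≤ s → 0 ≤ t → g ((s+t)/2)^2 ≤ g s * g t)
    {p : ℝ} (hp : 0 < p) :
    ∀ n : ℕ, ∀ k : ℕ, k ≤ 2^n →
      g ((k : ℝ) * p / 2^n) ≤ g p ^ ((k:ℝ)/2^n) * g 0 ^ (1 - (k:ℝ)/2^n) := by
  intro n
  induction n with
  | zero =>
    intro k hk
    interval_cases k
    · norm_num
    · norm_num
  | succ n ih =>
    have h2n : (2:ℕ)^(n+1) = 2*2^n := by ring
    intro k hk
    rcases Nat.even_or_odd k with ⟨j, hj⟩ | ⟨j, hj⟩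
    · subst hj
      have hj2 : j ≤ 2^n := by omega
      have h1 : ((j + j : ℕ) : ℝ) * p / 2^(n+1) = (j:ℝ) * p / 2^n := by
        push_cast; ring
      have h2 : ((j + j : ℕ) : ℝ) / 2^(n+1) = (j:ℝ) / 2^n := by
        push_cast; ring
      rw [h1, h2]; exact ih j hj2
    · subst hj
      have hj2 : j + 1 ≤ 2^n := by omega
      have hj1 : j ≤ 2^n := by omega
      set a := (j:ℝ) * p / 2^n with ha
      set b := ((j:ℝ)+1) * p / 2^n with hb
      have hA := ih j hj1
      have hB := ih (j+1) hj2
      have hBc : g (((j:ℕ)+1 : ℕ) * p / 2^n) = g b := by push_cast [hb]; ring_nf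
      have hAc' : ((j+1 : ℕ):ℝ)/2^n = ((j:ℝ)+1)/2^n := by push_cast; ring
      rw [hBc, hAc'] at hB
      have ha0 : 0 ≤ a := by positivity
      have hb0 : 0 ≤ b := by positivity
      have hmid' := hmid a b ha0 hb0
      have hmval : ((2*j+1 : ℕ):ℝ) * p / 2^(n+1) = (a+b)/2 := by
        rw [ha, hb]; push_cast; ring
      rw [hmval]
      set R := g p ^ (((2*j+1:ℕ):ℝ)/2^(n+1)) * g 0 ^ (1 - ((2*j+1:ℕ):ℝ)/2^(n+1)) with hR
      have hRpos : 0 < R :=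
        mul_pos (Real.rpow_pos_of_pos (hg p) _) (Real.rpow_pos_of_pos (hg 0) _)
      have hR2 : R^2 = (g p ^ ((j:ℝ)/2^n) * g p ^ (((j:ℝ)+1)/2^n)) *
          (g 0 ^ (1 - (j:ℝ)/2^n) * g 0 ^ (1 - ((j:ℝ)+1)/2^n)) := by
        rw [hR, mul_pow, sq, sq, ← Real.rpow_add (hg p), ← Real.rpow_add (hg 0)]
        rw [← Real.rpow_add (hg p), ← Real.rpow_add (hg 0)]
        congr 1
        · congr 1; push_cast; ring
        · congr 1; push_cast; ring
      have hle : g ((a+b)/2)^2 ≤ R^2 := by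
        calc g ((a+b)/2)^2 ≤ g a * g b := hmid'
        _ ≤ (g p ^ ((j:ℝ)/2^n) * g 0 ^ (1 - (j:ℝ)/2^n)) *
            (g p ^ (((j:ℝ)+1)/2^n) * g 0 ^ (1 - ((j:ℝ)+1)/2^n)) :=
          mul_le_mul hA hB (hg b).le
            (mul_pos (Real.rpow_pos_of_pos (hg p) _) (Real.rpow_pos_of_pos (hg 0) _)).le
        _ = R^2 := by rw [hR2]; ring
      have h := Real.sqrt_le_sqrt hle
      rwa [Real.sqrt_sq (hg _).le, Real.sqrt_sq hRpos.le] at h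

lemma objb_interp_eps {g : ℝ → ℝ} (hg : ∀ t, 0 < g t)
    (hmid : ∀ s t : ℝ, 0 ≤ s → 0 ≤ t → g ((s+t)/2)^2 ≤ g s * g t)
    (hcont : ContinuousOn g (Set.Ioi 0))
    {p s : ℝ} (hs : 0 < s) (hsp : s < p) :
    g s ≤ g p ^ (s/p) * g 0 ^ (1 - s/p) := by
  have hp : 0 < p := hs.trans hsp
  set lam := s / p with hlam
  have hlam0 : 0 < lam := div_pos hs hp
  have hlam1 : lam < 1 := (div_lt_one hp).mpr hsp
  set k : ℕ → ℕ := fun n => ⌊lam * 2^n⌋₊ with hk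
  set r : ℕ → ℝ := fun n => (k n : ℝ) / 2^n with hr
  have hkle : ∀ n, k n ≤ 2^n := by
    intro n
    apply Nat.floor_le_of_le
    calc lam * 2^n ≤ 1 * 2^n := by
          apply mul_le_mul_of_nonneg_right hlam1.le (by positivity)
    _ = ((2^n : ℕ) : ℝ) := by push_cast; ring
  have hrle : ∀ n, r n ≤ lam := by
    intro n
    rw [hr, div_le_iff₀ (by positivity : (0:ℝ) < 2^n)]
    exact Nat.floor_le (by positivity)
  have hrge : ∀ n, lam - (1/2)^n ≤ r n := by
    intro n
    have h2 : (0:ℝ) < 2^n := by positivity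
    have h1 : lam * 2^n ≤ (k n : ℝ) + 1 := (Nat.lt_floor_add_one _).le
    have h3 : lam ≤ ((k n : ℝ) + 1)/2^n := (le_div_iff₀ h2).mpr h1
    have e : ((k n:ℝ)+1)/2^n = r n + (1/2)^n := by
      rw [hr]; field_simp
      rw [← mul_pow]; norm_num
    rw [e] at h3; linarith
  have hrtend : Filter.Tendsto r Filter.atTop (nhds lam) := by
    apply tendsto_of_tendsto_of_tendsto_of_le_of_le
      (g := fun n : ℕ => lam - (1/2)^n) (h := fun _ => lam)
    · have : Filter.Tendsto (fun n : ℕ => (1/2 : ℝ)^n) Filter.atTop (nhds 0) :=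
        tendsto_pow_atTop_nhds_zero_of_lt_one (by norm_num) (by norm_num)
      simpa using (tendsto_const_nhds (x := lam)).sub this
    · exact tendsto_const_nhds
    · exact hrge
    · exact hrle
  have hbnd : ∀ n, g (r n * p) ≤ g p ^ (r n) * g 0 ^ (1 - r n) := by
    intro n
    have := objb_interp_dyadic hg hmid hp n (k n) (hkle n)
    have hx : (k n : ℝ) * p / 2^n = r n * p := by rw [hr]; ring
    rwa [hx] at this
  have hxt : Filter.Tendsto (fun n => r n * p) Filter.atTop (nhds s) := by
    have := hrtend.mul_const p
    rwa [hlam, div_mul_cancel₀ _ hp.ne'] at this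
  have hgc : ContinuousAt g s := hcont.continuousAt (Ioi_mem_nhds hs)
  have hL : Filter.Tendsto (fun n => g (r n * p)) Filter.atTop (nhds (g s)) :=
    hgc.tendsto.comp hxt
  have hR : Filter.Tendsto (fun n => g p ^ (r n) * g 0 ^ (1 - r n)) Filter.atTop
      (nhds (g p ^ lam * g 0 ^ (1 - lam))) := by
    have h1 : Filter.Tendsto (fun n => g p ^ (r n)) Filter.atTop (nhds (g p ^ lam)) :=
      ((Real.continuousAt_const_rpow (hg p).ne').tendsto).comp hrtend
    have h2 : Filter.Tendsto (fun n => g 0 ^ (1 - r n)) Filter.atTop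
        (nhds (g 0 ^ (1 - lam))) :=
      ((Real.continuousAt_const_rpow (hg 0).ne').tendsto).comp
        ((tendsto_const_nhds (x := (1:ℝ))).sub hrtend)
    exact h1.mul h2
  exact le_of_tendsto_of_tendsto' hL hR hbnd

lemma objb_interp_main {f : ℝ → ℝ} (hf0 : ∀ t, 0 ≤ f t)
    (hmid : ∀ s t : ℝ, 0 ≤ s → 0 ≤ t → f ((s+t)/2)^2 ≤ f s * f t)
    (hcont : ContinuousOn f (Set.Ioi 0))
    {p s : ℝ} (hs : 0 < s) (hsp : s < p) :
    f s ≤ f p ^ (s/p) * f 0 ^ (1 - s/p) := by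
  have hp : 0 < p := hs.trans hsp
  have hsp0 : 0 ≤ s/p := by positivity
  have hsp1 : 0 ≤ 1 - s/p := by
    have : s/p < 1 := (div_lt_one hp).mpr hsp
    linarith
  have key : ∀ ε : ℝ, 0 < ε → f s ≤ (f p + ε) ^ (s/p) * (f 0 + ε) ^ (1 - s/p) := by
    intro ε hε
    set g := fun t => f t + ε with hgdef
    have hg : ∀ t, 0 < g t := fun t => add_pos_of_nonneg_of_pos (hf0 t) hε
    have hgmid : ∀ a b : ℝ, 0 ≤ a → 0 ≤ b → g ((a+b)/2)^2 ≤ g a * g b := by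
      intro a b ha hb
      have h1 := hmid a b ha hb
      have h2 : 2 * f ((a+b)/2) ≤ f a + f b := by
        nlinarith [hf0 a, hf0 b, hf0 ((a+b)/2), sq_nonneg (f a - f b)]
      simp only [hgdef]
      nlinarith [hε.le]
    have hgcont : ContinuousOn g (Set.Ioi 0) := hcont.add continuousOn_const
    have h := objb_interp_eps hg hgmid hgcont hs hsp
    calc f s ≤ g s := by simp only [hgdef]; linarith
    _ ≤ _ := h
  have h1 : Filter.Tendsto (fun ε : ℝ => (f p + ε) ^ (s/p)) (nhdsWithin 0 (Set.Ioi 0))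
      (nhds (f p ^ (s/p))) := by
    have ha : Filter.Tendsto (fun ε : ℝ => f p + ε) (nhdsWithin 0 (Set.Ioi 0))
        (nhds (f p)) := by
      have h0 : Filter.Tendsto (fun ε : ℝ => f p + ε) (nhds (0:ℝ)) (nhds (f p + 0)) :=
        ((continuous_const (y := f p)).add continuous_id).tendsto (0:ℝ)
      rw [add_zero] at h0
      exact h0.mono_left nhdsWithin_le_nhds
    exact ((Real.continuousAt_rpow_const (f p) (s/p) (Or.inr hsp0)).tendsto).comp ha
  have h2 : Filter.Tendsto (fun ε : ℝ => (f 0 + ε) ^ (1 - s/p)) (nhdsWithin 0 (Set.Ioi 0))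
      (nhds (f 0 ^ (1 - s/p))) := by
    have ha : Filter.Tendsto (fun ε : ℝ => f 0 + ε) (nhdsWithin 0 (Set.Ioi 0))
        (nhds (f 0)) := by
      have h0 : Filter.Tendsto (fun ε : ℝ => f 0 + ε) (nhds (0:ℝ)) (nhds (f 0 + 0)) :=
        ((continuous_const (y := f 0)).add continuous_id).tendsto (0:ℝ)
      rw [add_zero] at h0
      exact h0.mono_left nhdsWithin_le_nhds
    exact ((Real.continuousAt_rpow_const (f 0) (1 - s/p) (Or.inr hsp1)).tendsto).comp ha
  exact ge_of_tendsto (h1.mul h2)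
    (eventually_mem_nhdsWithin.mono (fun ε hε => key ε hε))

lemma objb_sq_rpow {x : ℝ} (hx : 0 < x) (θ : ℝ) : (x^2)^θ = x^(2*θ) := by
  rw [← Real.rpow_natCast x 2, ← Real.rpow_mul hx.le]
  norm_num

end ObjBoundAux

/-- Let `ν > 0`, `μ ≥ 1` with `μ > ν/2 − 1`, `σ > 0`, `γ₀ > 0`, `ρ > 0`, `γ = γ₀σ`, and
`C₀ = γ²(T*T)^μ`, and assume `φ ≠ 0` and `Φ_MAP ≠ 0`.  If `u† = (T*T)^{ν/2}w` with
`‖w‖ ≤ ρ` and `⟨u†, φ⟩ ≥ 2ργ₀^{−ν/(μ+1)}‖φ‖`, then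
`(ρ‖(T*T)^{ν/2}(T*Φ_MAP − φ)‖ − ⟨Φ_MAP, Tu†⟩)/‖Φ_MAP‖
   ≤ −(⟨u†, φ⟩/‖φ‖ − 2ργ₀^{−ν/(μ+1)})/γ₀^{1/(μ+1)}`,
where `Φ_MAP = T C₀^{1/2}(C₀^{1/2}T*TC₀^{1/2} + σ²Id)⁻¹ C₀^{1/2}φ`.  The operator power
`(T*T)^s` is encoded by the family `pow`, uniquely determined by the hypotheses below;
the positive square root of `C₀ = γ² (T*T)^μ` is `S := γ • (T*T)^{μ/2}`, and `B` denotes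
the inverse `(C₀^{1/2}T*TC₀^{1/2} + σ²Id)⁻¹`. -/
theorem objective_bound_a_priori_under_source_condition
    {X Y : Type*}
    [NormedAddCommGroup X] [InnerProductSpace ℝ X] [CompleteSpace X]
    [TopologicalSpace.SeparableSpace X]
    [NormedAddCommGroup Y] [InnerProductSpace ℝ Y] [CompleteSpace Y]
    [TopologicalSpace.SeparableSpace Y]
    (T : X →L[ℝ] Y) (φ udag : X)
    (ν μ σ γ₀ γ ρ : ℝ) (hν : 0 < ν) (hμ : 1 ≤ μ) (hμν : ν / 2 - 1 < μ)
    (hσ : 0 < σ) (hγ₀ : 0 < γ₀) (hρ : 0 < ρ) (hγ : γ = γ₀ * σ)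
    -- `pow s` is the operator power `(T*T)^s`, characterized by:
    (pow : ℝ → (X →L[ℝ] X))
    (hpow0 : pow 0 = 1)
    (hpow1 : pow 1 = (ContinuousLinearMap.adjoint T) ∘L T)
    (hpowsa : ∀ s : ℝ, 0 < s → IsSelfAdjoint (pow s))
    (hpowpos : ∀ s : ℝ, 0 < s → ∀ x : X, 0 ≤ ⟪(pow s) x, x⟫)
    (hpowadd : ∀ s t : ℝ, 0 < s → 0 < t → pow (s + t) = pow s ∘L pow t)
    (hpowcont : ContinuousOn pow (Set.Ioi (0 : ℝ)))
    -- `S = γ • (T*T)^{μ/2}` is the positive square root of `C₀ = γ² (T*T)^μ`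
    (S : X →L[ℝ] X) (hSdef : S = γ • pow (μ / 2))
    -- `B` is the inverse of `C₀^{1/2} T* T C₀^{1/2} + σ² Id`
    (B : X →L[ℝ] X)
    (hB : B ∘L (S ∘L (ContinuousLinearMap.adjoint T) ∘L T ∘L S + σ ^ 2 • 1) = 1)
    (hB' : (S ∘L (ContinuousLinearMap.adjoint T) ∘L T ∘L S + σ ^ 2 • 1) ∘L B = 1)
    (hφ : φ ≠ 0) (hΦmap : T (S (B (S φ))) ≠ 0)
    -- the source condition `u† = (T*T)^{ν/2} w`, `‖w‖ ≤ ρ`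
    (w : X) (hw : ‖w‖ ≤ ρ) (hudag : udag = (pow (ν / 2)) w)
    -- the feature is large enough
    (hfeat : 2 * ρ * γ₀ ^ (-ν / (μ + 1)) * ‖φ‖ ≤ ⟪udag, φ⟫) :
    (ρ * ‖(pow (ν / 2)) ((ContinuousLinearMap.adjoint T) (T (S (B (S φ)))) - φ)‖
        - ⟪T (S (B (S φ))), T udag⟫) / ‖T (S (B (S φ)))‖
      ≤ -((⟪udag, φ⟫ / ‖φ‖ - 2 * ρ * γ₀ ^ (-ν / (μ + 1))) / γ₀ ^ (1 / (μ + 1))) := by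
  have hγpos : 0 < γ := by rw [hγ]; positivity
  have hμ2 : (0:ℝ) < μ/2 := by linarith
  have hp1 : (0:ℝ) < μ + 1 := by linarith
  have hν2 : (0:ℝ) < ν/2 := by linarith
  -- pointwise composition facts
  have hadd : ∀ s t : ℝ, 0 < s → 0 < t → ∀ x : X, pow s (pow t x) = pow (s+t) x := by
    intro s t hs ht x
    rw [hpowadd s t hs ht]; rfl
  have h1f : ∀ x : X, pow 1 x = (ContinuousLinearMap.adjoint T) (T x) := by
    intro x; rw [hpow1]; rfl
  have hsaf : ∀ s : ℝ, 0 < s → ∀ x z : X, ⟪pow s x, z⟫ = ⟪x, pow s z⟫ := by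
    intro s hs x z
    have hsa := ContinuousLinearMap.isSelfAdjoint_iff'.mp (hpowsa s hs)
    conv_lhs => rw [← hsa]
    exact ContinuousLinearMap.adjoint_inner_left _ _ _
  -- the operator S (T* T) S equals γ² pow(μ+1)
  have hSAS : S ∘L (ContinuousLinearMap.adjoint T) ∘L T ∘L S = (γ^2) • pow (μ+1) := by
    ext x
    simp only [ContinuousLinearMap.comp_apply, ContinuousLinearMap.smul_apply, hSdef]
    rw [← h1f, map_smul, map_smul, hadd 1 (μ/2) one_pos hμ2,
      hadd (μ/2) (1 + μ/2) hμ2 (by linarith)]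
    have e : μ/2 + (1 + μ/2) = μ + 1 := by ring
    rw [e, smul_smul, sq]
  -- B commutes with pow s
  have hMop : S ∘L (ContinuousLinearMap.adjoint T) ∘L T ∘L S + σ ^ 2 • 1
      = (γ^2) • pow (μ+1) + σ^2 • 1 := by rw [hSAS]
  have hBcomm : ∀ s : ℝ, 0 < s → ∀ x : X, B (pow s x) = pow s (B x) := by
    intro s hs
    have hcpow : Commute (pow s) (pow (μ+1)) := by
      show pow s * pow (μ+1) = pow (μ+1) * pow s
      show pow s ∘L pow (μ+1) = pow (μ+1) ∘L pow s
      rw [← hpowadd s (μ+1) hs hp1, ← hpowadd (μ+1) s hp1 hs, add_comm]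
    have hcomm' : Commute (pow s) ((γ^2) • pow (μ+1) + σ^2 • 1) := by
      show pow s * _ = _ * pow s
      rw [mul_add, add_mul, mul_smul_comm, smul_mul_assoc, mul_smul_comm,
        smul_mul_assoc, hcpow.eq, mul_one, one_mul]
    have hBm : B * ((γ^2) • pow (μ+1) + σ^2 • 1) = 1 := by
      rw [← hMop]; exact hB
    have hBm' : ((γ^2) • pow (μ+1) + σ^2 • 1) * B = 1 := by
      rw [← hMop]; exact hB'
    have hBP : B * pow s = pow s * B := objb_comm_of_inv hBm hBm' hcomm'.eq
    intro x
    have h := ContinuousLinearMap.ext_iff.mp hBP x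
    simpa [ContinuousLinearMap.mul_apply] using h
  -- decomposition of φ
  have hμpos : (0:ℝ) < μ := by linarith
  have hMBφ : γ^2 • pow (μ+1) (B φ) + σ^2 • (B φ) = φ := by
    have h2 : (((γ^2) • pow (μ+1) + σ^2 • 1) ∘L B) = 1 := by rw [← hMop]; exact hB'
    have h := ContinuousLinearMap.ext_iff.mp h2 φ
    simpa [ContinuousLinearMap.comp_apply, ContinuousLinearMap.add_apply,
      ContinuousLinearMap.smul_apply, ContinuousLinearMap.one_apply] using h
  have hSBS : S (B (S φ)) = γ^2 • pow μ (B φ) := by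
    rw [hSdef]
    simp only [ContinuousLinearMap.smul_apply]
    rw [map_smul, hBcomm (μ/2) hμ2 φ, map_smul, hadd (μ/2) (μ/2) hμ2 hμ2,
      smul_smul, add_halves, sq]
  have hTadj : (ContinuousLinearMap.adjoint T) (T (S (B (S φ)))) = φ - σ^2 • (B φ) := by
    rw [← h1f, hSBS, map_smul, hadd 1 μ one_pos hμpos, add_comm 1 μ]
    rw [eq_sub_iff_add_eq]
    exact hMBφ
  have hΦeq : T (S (B (S φ))) = γ^2 • T (pow μ (B φ)) := by rw [hSBS, map_smul]
  set y := B φ with hy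
  -- norm of Φ
  have hΦnorm : ‖T (S (B (S φ)))‖ = γ^2 * ‖pow (μ + 1/2) y‖ := by
    have hδ : (0:ℝ) < μ + 1/2 := by linarith
    have heq : φ - σ^2 • y = γ^2 • pow (μ+1) y := by rw [← hMBφ]; abel
    have hsq : ‖T (S (B (S φ)))‖^2 = (γ^2 * ‖pow (μ + 1/2) y‖)^2 := by
      rw [← real_inner_self_eq_norm_sq]
      have step1 : ⟪T (S (B (S φ))), T (S (B (S φ)))⟫
          = ⟪(ContinuousLinearMap.adjoint T) (T (S (B (S φ)))), S (B (S φ))⟫ :=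
        (ContinuousLinearMap.adjoint_inner_left T _ _).symm
      rw [step1, hTadj, heq, hSBS, real_inner_smul_left, real_inner_smul_right]
      have step2 : ⟪pow (μ+1) y, pow μ y⟫ = ‖pow (μ + 1/2) y‖^2 := by
        rw [← hsaf μ hμpos (pow (μ+1) y) y, hadd μ (μ+1) hμpos hp1]
        have e : μ + (μ+1) = (μ+1/2) + (μ+1/2) := by ring
        rw [e, ← hadd (μ+1/2) (μ+1/2) hδ hδ, hsaf (μ+1/2) hδ,
          real_inner_self_eq_norm_sq]
      rw [step2]; ring
    have h1 : (0:ℝ) ≤ ‖T (S (B (S φ)))‖ := norm_nonneg _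
    have h2 : (0:ℝ) ≤ γ^2 * ‖pow (μ + 1/2) y‖ := by positivity
    calc ‖T (S (B (S φ)))‖ = Real.sqrt (‖T (S (B (S φ)))‖^2) := (Real.sqrt_sq h1).symm
    _ = Real.sqrt ((γ^2 * ‖pow (μ + 1/2) y‖)^2) := by rw [hsq]
    _ = γ^2 * ‖pow (μ + 1/2) y‖ := Real.sqrt_sq h2
  -- midpoint inequality for f s = ‖pow s y‖
  have hmidf : ∀ s t : ℝ, 0 ≤ s → 0 ≤ t →
      ‖pow ((s+t)/2) y‖^2 ≤ ‖pow s y‖ * ‖pow t y‖ := by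
    intro s t hs ht
    by_cases hm : s + t = 0
    · have hs0 : s = 0 := by linarith
      have ht0 : t = 0 := by linarith
      subst hs0; subst ht0
      norm_num [sq]
    · have hst : 0 < s + t := lt_of_le_of_ne (by positivity) (Ne.symm hm)
      have hmpos : 0 < (s+t)/2 := by linarith
      have hkey : ⟪pow (s+t) y, y⟫ = ⟪pow s y, pow t y⟫ := by
        rcases hs.lt_or_eq with hs0 | hs0
        · rcases ht.lt_or_eq with ht0 | ht0
          · rw [← hadd s t hs0 ht0 y, hsaf s hs0]
            exact real_inner_comm _ _
          · rw [← ht0, add_zero, hpow0]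
            simp
        · rw [← hs0, zero_add, hpow0]
          simp [real_inner_comm]
      calc ‖pow ((s+t)/2) y‖^2 = ⟪pow ((s+t)/2) y, pow ((s+t)/2) y⟫ :=
            (real_inner_self_eq_norm_sq _).symm
      _ = ⟪pow (s+t) y, y⟫ := by
          rw [← hsaf _ hmpos (pow ((s+t)/2) y) y, hadd _ _ hmpos hmpos, add_halves]
      _ = ⟪pow s y, pow t y⟫ := hkey
      _ ≤ ‖pow s y‖ * ‖pow t y‖ := real_inner_le_norm _ _
  have hfc : ContinuousOn (fun s : ℝ => ‖pow s y‖) (Set.Ioi 0) := by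
    have hev : Continuous (fun A : X →L[ℝ] X => A y) :=
      (ContinuousLinearMap.apply ℝ X y).continuous
    exact (hev.comp_continuousOn hpowcont).norm
  -- interpolation
  have hint : ∀ s : ℝ, 0 < s → s < μ+1 →
      ‖pow s y‖ ≤ ‖pow (μ+1) y‖ ^ (s/(μ+1)) * ‖y‖ ^ (1 - s/(μ+1)) := by
    intro s hs hsp
    have h := objb_interp_main (f := fun s : ℝ => ‖pow s y‖)
      (fun t => norm_nonneg _) hmidf hfc hs hsp
    simp only [hpow0, ContinuousLinearMap.one_apply] at h
    exact h
  set P := ‖pow (μ+1) y‖ with hP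
  set Q := ‖y‖ with hQ
  have hF : (0:ℝ) < ‖φ‖ := norm_pos_iff.mpr hφ
  -- bounds on the two components of φ
  have hcross : 0 ≤ ⟪pow (μ+1) y, y⟫ := hpowpos _ hp1 y
  have hdecomp : ‖φ‖^2 = (γ^2*P)^2 + 2*(γ^2*σ^2*⟪pow (μ+1) y, y⟫) + (σ^2*Q)^2 := by
    rw [← hMBφ, norm_add_sq_real, norm_smul, norm_smul, real_inner_smul_left,
      real_inner_smul_right]
    rw [Real.norm_eq_abs, Real.norm_eq_abs, abs_of_nonneg (sq_nonneg γ),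
      abs_of_nonneg (sq_nonneg σ)]
    ring
  have hc3 : 0 ≤ γ^2*σ^2*⟪pow (μ+1) y, y⟫ := by
    apply mul_nonneg (by positivity) hcross
  have hPnn : (0:ℝ) ≤ γ^2*P := by positivity
  have hQnn : (0:ℝ) ≤ σ^2*Q := by positivity
  have haP : γ^2*P ≤ ‖φ‖ := by nlinarith [hdecomp, hc3, hF, hPnn, hQnn, sq_nonneg (σ^2*Q)]
  have hbQ : σ^2*Q ≤ ‖φ‖ := by nlinarith [hdecomp, hc3, hF, hPnn, hQnn, sq_nonneg (γ^2*P)]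
  have hprod : ∀ θ : ℝ, 0 ≤ θ → θ ≤ 1 → (γ^2*P)^θ * (σ^2*Q)^(1-θ) ≤ ‖φ‖ := by
    intro θ h0 h1
    have hP0 : (0:ℝ) ≤ γ^2*P := by positivity
    have hQ0 : (0:ℝ) ≤ σ^2*Q := by positivity
    calc (γ^2*P)^θ * (σ^2*Q)^(1-θ) ≤ ‖φ‖^θ * ‖φ‖^(1-θ) := by
          apply mul_le_mul (Real.rpow_le_rpow hP0 haP h0)
            (Real.rpow_le_rpow hQ0 hbQ (by linarith))
            (Real.rpow_nonneg hQ0 _) (Real.rpow_nonneg hF.le _)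
    _ = ‖φ‖ := by rw [← Real.rpow_add hF]; norm_num
  -- scalar exponent identities
  set θ1 : ℝ := (ν/2)/(μ+1) with hθ1
  set θ2 : ℝ := (μ+1/2)/(μ+1) with hθ2
  have hθ1a : 0 ≤ θ1 := by positivity
  have hθ1b : θ1 ≤ 1 := by
    rw [hθ1, div_le_one hp1]; linarith
  have hθ2a : 0 ≤ θ2 := by positivity
  have hθ2b : θ2 ≤ 1 := by
    rw [hθ2, div_le_one hp1]; linarith
  have key1 : σ^2 = γ₀ ^ (-ν / (μ + 1)) * (γ^2)^θ1 * (σ^2)^(1-θ1) := by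
    have e1 : -ν / (μ + 1) + 2*θ1 = 0 := by
      rw [hθ1]; field_simp; ring
    have e2 : (2:ℝ)*θ1 + 2*(1-θ1) = 2 := by ring
    rw [hγ, mul_pow, Real.mul_rpow (by positivity) (by positivity),
      objb_sq_rpow hγ₀ θ1, objb_sq_rpow hσ θ1, objb_sq_rpow hσ (1-θ1)]
    have e3 : γ₀ ^ (-ν / (μ + 1)) * (γ₀^(2*θ1) * σ^(2*θ1)) * σ^(2*(1-θ1))
        = γ₀^(-ν / (μ + 1) + 2*θ1) * σ^(2*θ1 + 2*(1-θ1)) := by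
      rw [Real.rpow_add hγ₀, Real.rpow_add hσ]; ring
    rw [e3, e1, e2, Real.rpow_zero, one_mul,
      show ((2:ℝ) = ((2:ℕ):ℝ)) by norm_num, Real.rpow_natCast]
  have key2 : γ^2 = γ₀ ^ (1 / (μ + 1)) * (γ^2)^θ2 * (σ^2)^(1-θ2) := by
    have e1 : 1 / (μ + 1) + 2*θ2 = 2 := by
      rw [hθ2]; field_simp; ring
    have e2 : (2:ℝ)*θ2 + 2*(1-θ2) = 2 := by ring
    rw [hγ, mul_pow, Real.mul_rpow (by positivity) (by positivity),
      objb_sq_rpow hγ₀ θ2, objb_sq_rpow hσ θ2, objb_sq_rpow hσ (1-θ2)]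
    have e3 : γ₀ ^ (1 / (μ + 1)) * (γ₀^(2*θ2) * σ^(2*θ2)) * σ^(2*(1-θ2))
        = γ₀^(1 / (μ + 1) + 2*θ2) * σ^(2*θ2 + 2*(1-θ2)) := by
      rw [Real.rpow_add hγ₀, Real.rpow_add hσ]; ring
    rw [e3, e1, e2,
      show ((2:ℝ) = ((2:ℕ):ℝ)) by norm_num, Real.rpow_natCast, Real.rpow_natCast]
  -- the two key norm bounds
  have hb1 : σ^2 * ‖pow (ν/2) y‖ ≤ γ₀ ^ (-ν / (μ + 1)) * ‖φ‖ := by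
    have hι := hint (ν/2) hν2 (by linarith)
    have hθeq : (ν/2)/(μ+1) = θ1 := rfl
    calc σ^2 * ‖pow (ν/2) y‖ ≤ σ^2 * (P^θ1 * Q^(1-θ1)) := by
          rw [← hθeq]
          exact mul_le_mul_of_nonneg_left hι (by positivity)
    _ = γ₀ ^ (-ν / (μ + 1)) * ((γ^2*P)^θ1 * (σ^2*Q)^(1-θ1)) := by
          rw [Real.mul_rpow (sq_nonneg γ) (norm_nonneg _),
            Real.mul_rpow (sq_nonneg σ) (norm_nonneg _)]
          conv_lhs => rw [key1]
          ring
    _ ≤ γ₀ ^ (-ν / (μ + 1)) * ‖φ‖ :=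
          mul_le_mul_of_nonneg_left (hprod θ1 hθ1a hθ1b)
            (Real.rpow_nonneg hγ₀.le _)
  have hb2 : ‖T (S (B (S φ)))‖ ≤ γ₀ ^ (1 / (μ + 1)) * ‖φ‖ := by
    have hι := hint (μ+1/2) (by linarith) (by linarith)
    have hθeq : (μ+1/2)/(μ+1) = θ2 := rfl
    rw [hΦnorm]
    calc γ^2 * ‖pow (μ+1/2) y‖ ≤ γ^2 * (P^θ2 * Q^(1-θ2)) := by
          rw [← hθeq]
          exact mul_le_mul_of_nonneg_left hι (by positivity)
    _ = γ₀ ^ (1 / (μ + 1)) * ((γ^2*P)^θ2 * (σ^2*Q)^(1-θ2)) := by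
          rw [Real.mul_rpow (sq_nonneg γ) (norm_nonneg _),
            Real.mul_rpow (sq_nonneg σ) (norm_nonneg _)]
          conv_lhs => rw [key2]
          ring
    _ ≤ γ₀ ^ (1 / (μ + 1)) * ‖φ‖ :=
          mul_le_mul_of_nonneg_left (hprod θ2 hθ2a hθ2b)
            (Real.rpow_nonneg hγ₀.le _)
  -- inner product identity
  have hinner : ⟪T (S (B (S φ))), T udag⟫ = ⟪udag, φ⟫ - σ^2 * ⟪pow (ν/2) y, w⟫ := by
    have h1 : ⟪T (S (B (S φ))), T udag⟫
        = ⟪(ContinuousLinearMap.adjoint T) (T (S (B (S φ)))), udag⟫ :=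
      (ContinuousLinearMap.adjoint_inner_left T _ _).symm
    rw [h1, hTadj, inner_sub_left, real_inner_smul_left, hudag,
      ← hsaf (ν/2) hν2 y w, real_inner_comm φ]
  have hcs : σ^2 * ⟪pow (ν/2) y, w⟫ ≤ ρ * (γ₀ ^ (-ν / (μ + 1)) * ‖φ‖) := by
    have h1 : ⟪pow (ν/2) y, w⟫ ≤ ‖pow (ν/2) y‖ * ρ := by
      calc ⟪pow (ν/2) y, w⟫ ≤ ‖pow (ν/2) y‖ * ‖w‖ := real_inner_le_norm _ _
      _ ≤ ‖pow (ν/2) y‖ * ρ := mul_le_mul_of_nonneg_left hw (norm_nonneg _)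
    calc σ^2 * ⟪pow (ν/2) y, w⟫ ≤ σ^2 * (‖pow (ν/2) y‖ * ρ) :=
          mul_le_mul_of_nonneg_left h1 (sq_nonneg σ)
    _ = ρ * (σ^2 * ‖pow (ν/2) y‖) := by ring
    _ ≤ ρ * (γ₀ ^ (-ν / (μ + 1)) * ‖φ‖) := mul_le_mul_of_nonneg_left hb1 hρ.le
  -- numerator of the goal
  have hnormnum : ‖(pow (ν/2)) ((ContinuousLinearMap.adjoint T) (T (S (B (S φ)))) - φ)‖
      = σ^2 * ‖pow (ν/2) y‖ := by
    rw [hTadj, show φ - σ^2 • y - φ = -(σ^2 • y) by abel, map_neg, map_smul,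
      norm_neg, norm_smul, Real.norm_eq_abs, abs_of_nonneg (sq_nonneg σ)]
  set K := γ₀ ^ (-ν / (μ + 1)) with hK
  set G := γ₀ ^ (1 / (μ + 1)) with hG
  have hKpos : 0 < K := Real.rpow_pos_of_pos hγ₀ _
  have hGpos : 0 < G := Real.rpow_pos_of_pos hγ₀ _
  have hD : 0 < ‖T (S (B (S φ)))‖ := norm_pos_iff.mpr hΦmap
  have hNum : ρ * ‖(pow (ν/2)) ((ContinuousLinearMap.adjoint T) (T (S (B (S φ)))) - φ)‖
      - ⟪T (S (B (S φ))), T udag⟫ ≤ 2*ρ*K*‖φ‖ - ⟪udag, φ⟫ := by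
    rw [hnormnum, hinner]
    have h1 : ρ * (σ^2 * ‖pow (ν/2) y‖) ≤ ρ * (K * ‖φ‖) :=
      mul_le_mul_of_nonneg_left hb1 hρ.le
    linarith [hcs]
  have hc0 : 0 ≤ ⟪udag, φ⟫ - 2*ρ*K*‖φ‖ := by
    rw [hK]; linarith [hfeat]
  have step1 : (ρ * ‖(pow (ν/2)) ((ContinuousLinearMap.adjoint T) (T (S (B (S φ)))) - φ)‖
      - ⟪T (S (B (S φ))), T udag⟫) / ‖T (S (B (S φ)))‖
      ≤ (2*ρ*K*‖φ‖ - ⟪udag, φ⟫) / ‖T (S (B (S φ)))‖ :=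
    div_le_div_of_nonneg_right hNum hD.le
  have step2 : (2*ρ*K*‖φ‖ - ⟪udag, φ⟫) / ‖T (S (B (S φ)))‖
      ≤ (2*ρ*K*‖φ‖ - ⟪udag, φ⟫) / (G * ‖φ‖) := by
    rw [div_le_div_iff₀ hD (by positivity)]
    apply mul_le_mul_of_nonpos_left hb2 (by linarith)
  have step3 : (2*ρ*K*‖φ‖ - ⟪udag, φ⟫) / (G * ‖φ‖)
      = -((⟪udag, φ⟫ / ‖φ‖ - 2*ρ*K) / G) := by
    field_simp
    ring
  have := le_trans (le_trans step1 step2) (le_of_eq step3)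
  calc (ρ * ‖(pow (ν / 2)) ((ContinuousLinearMap.adjoint T) (T (S (B (S φ)))) - φ)‖
        - ⟪T (S (B (S φ))), T udag⟫) / ‖T (S (B (S φ)))‖
      ≤ -((⟪udag, φ⟫ / ‖φ‖ - 2*ρ*K) / G) := this
  _ = -((⟪udag, φ⟫ / ‖φ‖ - 2 * ρ * γ₀ ^ (-ν / (μ + 1))) / γ₀ ^ (1 / (μ + 1))) := by
      rw [hK, hG]
end

section
/- Let ξ > 0, ρ > 0, ν > 0, and μ > −1, and define f : (0,∞) → ℝ by f(γ₀) := (ξ − 2ργ₀^{−ν/(μ+1)})·γ₀^{−1/(μ+1)}, and set γ̄₀ := (ξ/(2ρ(ν+1)))^{−(μ+1)/ν}. Then for every γ₀ > 0, f(γ₀) ≤ f(γ̄₀) = (νξ/(ν+1))·(ξ/(2ρ(ν+1)))^{1/ν}. -/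
lemma key_max (ξ ρ ν : ℝ) (hρ : 0 < ρ) (hν : 0 < ν) (t T : ℝ) (ht : 0 < t) (hT : 0 < T)
    (hmax : ξ = 2 * ρ * (ν + 1) * T ^ ν) :
    (ξ - 2 * ρ * t ^ ν) * t ≤ (ξ - 2 * ρ * T ^ ν) * T := by
  have ha : 0 < t / T := div_pos ht hT
  have hb : 1 + (ν + 1) * (t / T - 1) ≤ (1 + (t / T - 1)) ^ (ν + 1) :=
    one_add_mul_self_le_rpow_one_add (by linarith) (by linarith)
  rw [show (1 : ℝ) + (t / T - 1) = t / T by ring] at hb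
  have he : (t / T) ^ (ν + 1) = (t ^ ν / T ^ ν) * (t / T) := by
    rw [Real.rpow_add_one (ne_of_gt ha), Real.div_rpow ht.le hT.le]
  rw [he] at hb
  have hu : 0 < t ^ ν := Real.rpow_pos_of_pos ht ν
  have hU : 0 < T ^ ν := Real.rpow_pos_of_pos hT ν
  have hb' : (1 + (ν + 1) * (t / T - 1)) * (T ^ ν * T) ≤
      ((t ^ ν / T ^ ν) * (t / T)) * (T ^ ν * T) := by
    exact mul_le_mul_of_nonneg_right hb (by positivity)
  have hTn : T ≠ 0 := ne_of_gt hT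
  have hUn : T ^ ν ≠ 0 := ne_of_gt hU
  have hb'' : (T ^ ν * T) + (ν + 1) * (t * T ^ ν - T * T ^ ν) ≤ t ^ ν * t := by
    have h1 : ((t ^ ν / T ^ ν) * (t / T)) * (T ^ ν * T) = t ^ ν * t := by
      field_simp
    have h2 : (1 + (ν + 1) * (t / T - 1)) * (T ^ ν * T) =
        (T ^ ν * T) + (ν + 1) * (t * T ^ ν - T * T ^ ν) := by
      field_simp
    linarith [h1 ▸ h2 ▸ hb']
  rw [hmax]
  nlinarith [hb'', hρ]

/-- Let `ξ, ρ, ν > 0` and `μ > −1`.  The function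
`f(γ₀) = (ξ − 2ργ₀^{−ν/(μ+1)})·γ₀^{−1/(μ+1)}` on `(0,∞)` attains its maximum at
`γ̄₀ = (ξ/(2ρ(ν+1)))^{−(μ+1)/ν}`, with maximal value `(νξ/(ν+1))·(ξ/(2ρ(ν+1)))^{1/ν}`. -/
theorem a_priori_gamma_maximizer (ξ ρ ν μ : ℝ) (hξ : 0 < ξ) (hρ : 0 < ρ) (hν : 0 < ν)
    (hμ : -1 < μ)
    (f : ℝ → ℝ)
    (hf : ∀ γ₀ : ℝ, 0 < γ₀ →
      f γ₀ = (ξ - 2 * ρ * γ₀ ^ (-ν / (μ + 1))) * γ₀ ^ (-1 / (μ + 1)))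
    (γbar : ℝ) (hγbar : γbar = (ξ / (2 * ρ * (ν + 1))) ^ (-(μ + 1) / ν)) :
    (∀ γ₀ : ℝ, 0 < γ₀ → f γ₀ ≤ f γbar)
    ∧ f γbar = (ν * ξ / (ν + 1)) * (ξ / (2 * ρ * (ν + 1))) ^ (1 / ν) := by
  have hμ1 : 0 < μ + 1 := by linarith
  have hμn : μ + 1 ≠ 0 := ne_of_gt hμ1
  have hνn : ν ≠ 0 := ne_of_gt hν
  set c : ℝ := ξ / (2 * ρ * (ν + 1)) with hc_def
  have hc : 0 < c := by positivity
  have hγbar_pos : 0 < γbar := by rw [hγbar]; positivity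
  -- powers of γbar
  have hb1 : γbar ^ (-1 / (μ + 1)) = c ^ (1 / ν) := by
    rw [hγbar, ← Real.rpow_mul hc.le]
    congr 1
    field_simp <;> ring
  have hb2 : γbar ^ (-ν / (μ + 1)) = c := by
    rw [hγbar, ← Real.rpow_mul hc.le]
    rw [show -(μ + 1) / ν * (-ν / (μ + 1)) = 1 by field_simp <;> ring, Real.rpow_one]
  have hT : 0 < c ^ (1 / ν) := Real.rpow_pos_of_pos hc _
  have hTν : (c ^ (1 / ν)) ^ ν = c := by
    rw [← Real.rpow_mul hc.le, one_div, inv_mul_cancel₀ hνn, Real.rpow_one]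
  have hmax : ξ = 2 * ρ * (ν + 1) * (c ^ (1 / ν)) ^ ν := by
    rw [hTν, hc_def]
    field_simp
  have hfbar : f γbar = (ξ - 2 * ρ * c) * c ^ (1 / ν) := by
    rw [hf γbar hγbar_pos, hb1, hb2]
  constructor
  · intro γ₀ hγ₀
    rw [hf γ₀ hγ₀, hfbar]
    have ht : 0 < γ₀ ^ (-1 / (μ + 1)) := Real.rpow_pos_of_pos hγ₀ _
    have h1 : γ₀ ^ (-ν / (μ + 1)) = (γ₀ ^ (-1 / (μ + 1))) ^ ν := by
      rw [← Real.rpow_mul hγ₀.le]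
      congr 1
      field_simp
    have hk := key_max ξ ρ ν hρ hν _ _ ht hT hmax
    rw [hTν] at hk
    rw [h1]
    exact hk
  · rw [hfbar]
    have : ξ - 2 * ρ * c = ν * ξ / (ν + 1) := by
      rw [hc_def]
      field_simp
      ring
    rw [this]
end

section
/- Let h be an integrable function on the circle of circumference 2 (AddCircle 2) whose Fourier coefficients satisfy ĥ(n) = (1/2)·(1 + 0.0009·n²)^{−2} for all n ∈ ℤ, where ĥ(n) = (1/2)∫ over one period of h(x)·exp(−πinx) dx. Then for every u ∈ L²(AddCircle 2), the periodic convolution h ⋆ u, defined by (h ⋆ u)(x) = ∫ over one period of h(x − z)u(z) dz, lies in L² and satisfies ‖h ⋆ u‖_{L²} ≤ ‖u‖_{L²}; moreover equality holds for nonzero constant functions u, so the induced linear operator u ↦ h ⋆ u on L²(AddCircle 2) has operator norm exactly 1. -/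
open MeasureTheory

instance : Fact ((0:ℝ) < 2) := ⟨by norm_num⟩

open scoped ENNReal NNReal

/-- Integrals with respect to `volume` versus the normalized Haar measure on `AddCircle 2`. -/
lemma PCON.myInt {E : Type} [NormedAddCommGroup E] [NormedSpace ℝ E]
    (f : AddCircle (2:ℝ) → E) :
    ∫ x, f x = (2:ℝ) • ∫ x, f x ∂AddCircle.haarAddCircle := by
  rw [AddCircle.volume_eq_smul_haarAddCircle, integral_smul_measure,
    ENNReal.toReal_ofReal (by norm_num : (0:ℝ) ≤ 2)]

lemma PCON.haar_eq : (AddCircle.haarAddCircle : Measure (AddCircle (2:ℝ)))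
    = (ENNReal.ofReal 2)⁻¹ • volume := by
  rw [AddCircle.volume_eq_smul_haarAddCircle, smul_smul,
    ENNReal.inv_mul_cancel (by norm_num) (by norm_num), one_smul]

lemma PCON.coeff_eq (f : AddCircle (2:ℝ) → ℂ) (n : ℤ) :
    (2:ℂ) * fourierCoeff f n = ∫ x, fourier (-n) x * f x := by
  have : fourierCoeff f n = ∫ t, fourier (-n) t * f t ∂AddCircle.haarAddCircle := rfl
  rw [this, PCON.myInt (fun x => fourier (-n) x * f x), Complex.real_smul]
  norm_num

lemma PCON.fourierCoeff_congr_haar {f g : AddCircle (2:ℝ) → ℂ}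
    (hfg : f =ᵐ[AddCircle.haarAddCircle] g) (n : ℤ) : fourierCoeff f n = fourierCoeff g n :=
  integral_congr_ae (hfg.mono fun x hx => by simp [hx])

lemma PCON.hprod_int {h u : AddCircle (2:ℝ) → ℂ} (hh : Integrable h volume)
    (hu : Integrable u volume) :
    Integrable (fun p : AddCircle (2:ℝ) × AddCircle (2:ℝ) => h (p.1 - p.2) * u p.2)
      (volume.prod volume) := by
  have := hu.convolution_integrand (ContinuousLinearMap.mul ℂ ℂ) hh
  simpa [mul_comm] using this

/-- Fourier coefficients of the periodic convolution. -/
lemma PCON.conv_coeff {h u : AddCircle (2:ℝ) → ℂ} (hh : Integrable h volume)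
    (hu : Integrable u volume) (n : ℤ) :
    (2:ℂ) * fourierCoeff (fun x => ∫ z, h (x - z) * u z) n
      = ((2:ℂ) * fourierCoeff h n) * ((2:ℂ) * fourierCoeff u n) := by
  set e : AddCircle (2:ℝ) → ℂ := fun t => fourier (-n) t with he
  have hechar : ∀ a b : AddCircle (2:ℝ), e (a + b) = e a * e b := by
    intro a b
    simp only [he, fourier_apply, smul_add, AddCircle.toCircle_add, Circle.coe_mul]
  have hprode : Integrable
      (fun p : AddCircle (2:ℝ) × AddCircle (2:ℝ) => e p.1 * (h (p.1 - p.2) * u p.2))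
      (volume.prod volume) := by
    refine (PCON.hprod_int hh hu).bdd_mul (c := 1)
      (((fourier (-n)).continuous.comp continuous_fst).aestronglyMeasurable) ?_
    filter_upwards with p
    simp [he, Circle.norm_coe]
  have swap : ∫ x, ∫ z, e x * (h (x - z) * u z) = ∫ z, ∫ x, e x * (h (x - z) * u z) :=
    integral_integral_swap hprode
  have inner : ∀ z : AddCircle (2:ℝ), ∫ x, e x * (h (x - z) * u z)
      = (e z * u z) * ∫ y, e y * h y := by
    intro z
    calc ∫ x, e x * (h (x - z) * u z) = (∫ x, e x * h (x - z)) * u z := by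
          simp_rw [← mul_assoc]
          exact integral_mul_const _ _
      _ = (∫ y, e (y + z) * h (y + z - z)) * u z := by
          rw [integral_add_right_eq_self (μ := volume) (fun w => e w * h (w - z)) z]
      _ = (e z * ∫ y, e y * h y) * u z := by
          congr 1
          simp_rw [add_sub_cancel_right, hechar, mul_comm (e _) (e z), mul_assoc]
          exact integral_const_mul _ _
      _ = (e z * u z) * ∫ y, e y * h y := by ring
  rw [PCON.coeff_eq, PCON.coeff_eq, PCON.coeff_eq]
  calc ∫ x, e x * ∫ z, h (x - z) * u z
      = ∫ x, ∫ z, e x * (h (x - z) * u z) := by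
        simp_rw [integral_const_mul]
    _ = ∫ z, ∫ x, e x * (h (x - z) * u z) := swap
    _ = ∫ z, (e z * u z) * ∫ y, e y * h y := by simp_rw [inner]
    _ = (∫ y, e y * h y) * ∫ z, e z * u z := by
        rw [integral_mul_const]; ring

/-- The periodic convolution of an integrable function with an `L²` function is in `L²`. -/
lemma PCON.conv_mem {h u : AddCircle (2:ℝ) → ℂ} (hh : Integrable h volume)
    (hu : MemLp u 2 volume) :
    MemLp (fun x => ∫ z, h (x - z) * u z) 2 volume := by
  have hui : Integrable u volume := hu.integrable (by norm_num)
  have hconv_int : Integrable (fun x => ∫ z, h (x - z) * u z) volume :=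
    (PCON.hprod_int hh hui).integral_prod_left
  refine ⟨hconv_int.aestronglyMeasurable, ?_⟩
  set H : ℝ≥0∞ := ∫⁻ y, (‖h y‖₊ : ℝ≥0∞) with hHdef
  have hHlt : H < ⊤ := hh.2
  set HU : ℝ≥0∞ := ∫⁻ z, (‖u z‖₊ : ℝ≥0∞) ^ (2:ℝ) with hHU
  have hHUlt : HU < ⊤ := by
    have h2 := hu.2
    rw [eLpNorm_eq_lintegral_rpow_enorm_toReal (by norm_num) (by norm_num)] at h2
    by_contra hcon
    rw [not_lt, top_le_iff] at hcon
    rw [show ((2:ℝ≥0∞)).toReal = (2:ℝ) by norm_num] at h2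
    simp only [enorm_eq_nnnorm] at h2
    rw [← hHU] at h2
    rw [hcon, ENNReal.top_rpow_of_pos (by norm_num)] at h2
    exact (lt_irrefl _ h2)
  have hsub : ∀ x : AddCircle (2:ℝ), ∫⁻ z, (‖h (x - z)‖₊ : ℝ≥0∞) = H := by
    intro x
    rw [hHdef]
    exact (Measure.measurePreserving_sub_left volume x).lintegral_comp_emb
      (MeasurableEquiv.subLeft x).measurableEmbedding (fun y => (‖h y‖₊ : ℝ≥0∞))
  set W : AddCircle (2:ℝ) → ℝ≥0∞ :=
    fun x => ∫⁻ z, (‖h (x - z)‖₊ : ℝ≥0∞) * (‖u z‖₊ : ℝ≥0∞) ^ (2:ℝ) with hW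
  have pointwise : ∀ x : AddCircle (2:ℝ),
      (‖∫ z, h (x - z) * u z‖₊ : ℝ≥0∞) ^ (2:ℝ) ≤ H * W x := by
    intro x
    have hax : AEMeasurable (fun z => (‖h (x - z)‖₊ : ℝ≥0∞)) volume := by
      have := hh.aestronglyMeasurable.comp_quasiMeasurePreserving
        (Measure.measurePreserving_sub_left volume x).quasiMeasurePreserving
      exact this.enorm
    have hbx : AEMeasurable (fun z => (‖u z‖₊ : ℝ≥0∞)) volume := hu.aestronglyMeasurable.enorm
    have step0 : (‖∫ z, h (x - z) * u z‖₊ : ℝ≥0∞)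
        ≤ ∫⁻ z, (‖h (x - z)‖₊ : ℝ≥0∞) * (‖u z‖₊ : ℝ≥0∞) := by
      refine (enorm_integral_le_lintegral_enorm _).trans ?_
      simp [nnnorm_mul, ENNReal.coe_mul]
      exact le_rfl
    have CS : ∫⁻ z, (‖h (x - z)‖₊ : ℝ≥0∞) * (‖u z‖₊ : ℝ≥0∞)
        ≤ H ^ (2⁻¹:ℝ) * (W x) ^ (2⁻¹:ℝ) := by
      have holder := ENNReal.lintegral_mul_le_Lp_mul_Lq volume
        (Real.holderConjugate_iff.mpr ⟨by norm_num, by norm_num⟩ : Real.HolderConjugate 2 2)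
        (f := fun z => (‖h (x - z)‖₊ : ℝ≥0∞) ^ (2⁻¹:ℝ))
        (g := fun z => (‖h (x - z)‖₊ : ℝ≥0∞) ^ (2⁻¹:ℝ) * (‖u z‖₊ : ℝ≥0∞))
        (hax.pow_const _) ((hax.pow_const _).mul hbx)
      have id1 : ∀ z : AddCircle (2:ℝ),
          ((‖h (x - z)‖₊ : ℝ≥0∞) ^ (2⁻¹:ℝ))
            * ((‖h (x - z)‖₊ : ℝ≥0∞) ^ (2⁻¹:ℝ) * (‖u z‖₊ : ℝ≥0∞))
          = (‖h (x - z)‖₊ : ℝ≥0∞) * (‖u z‖₊ : ℝ≥0∞) := by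
        intro z
        rw [← mul_assoc, ← ENNReal.rpow_add_of_nonneg _ _ (by norm_num) (by norm_num)]
        norm_num
      have id2 : ∀ z : AddCircle (2:ℝ),
          ((‖h (x - z)‖₊ : ℝ≥0∞) ^ (2⁻¹:ℝ)) ^ (2:ℝ) = (‖h (x - z)‖₊ : ℝ≥0∞) := by
        intro z; rw [← ENNReal.rpow_mul]; norm_num
      have id3 : ∀ z : AddCircle (2:ℝ),
          ((‖h (x - z)‖₊ : ℝ≥0∞) ^ (2⁻¹:ℝ) * (‖u z‖₊ : ℝ≥0∞)) ^ (2:ℝ)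
          = (‖h (x - z)‖₊ : ℝ≥0∞) * (‖u z‖₊ : ℝ≥0∞) ^ (2:ℝ) := by
        intro z
        rw [ENNReal.mul_rpow_of_nonneg _ _ (by norm_num : (0:ℝ) ≤ 2), ← ENNReal.rpow_mul]
        norm_num
      simp only [Pi.mul_apply, id1, id2, id3] at holder
      rw [hsub x] at holder
      rw [hW]
      convert holder using 2 <;> norm_num
    have step1 : (‖∫ z, h (x - z) * u z‖₊ : ℝ≥0∞) ≤ H ^ (2⁻¹:ℝ) * (W x) ^ (2⁻¹:ℝ) :=
      step0.trans CS
    calc (‖∫ z, h (x - z) * u z‖₊ : ℝ≥0∞) ^ (2:ℝ)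
        ≤ (H ^ (2⁻¹:ℝ) * (W x) ^ (2⁻¹:ℝ)) ^ (2:ℝ) :=
          ENNReal.rpow_le_rpow step1 (by norm_num)
      _ = H * W x := by
          rw [ENNReal.mul_rpow_of_nonneg _ _ (by norm_num : (0:ℝ) ≤ 2),
            ← ENNReal.rpow_mul, ← ENNReal.rpow_mul]
          norm_num
  have hG : AEMeasurable
      (fun p : AddCircle (2:ℝ) × AddCircle (2:ℝ) =>
        (‖h (p.1 - p.2)‖₊ : ℝ≥0∞) * (‖u p.2‖₊ : ℝ≥0∞) ^ (2:ℝ))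
      (volume.prod volume) := by
    have h1 : AEMeasurable (fun p : AddCircle (2:ℝ) × AddCircle (2:ℝ) =>
        (‖h (p.1 - p.2)‖₊ : ℝ≥0∞)) (volume.prod volume) :=
      (hh.aestronglyMeasurable.comp_quasiMeasurePreserving
        (quasiMeasurePreserving_sub_of_right_invariant volume volume)).enorm
    have h2 : AEMeasurable (fun p : AddCircle (2:ℝ) × AddCircle (2:ℝ) =>
        (‖u p.2‖₊ : ℝ≥0∞)) (volume.prod volume) :=
      (hu.aestronglyMeasurable.comp_quasiMeasurePreserving
        Measure.quasiMeasurePreserving_snd).enorm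
    exact h1.mul (h2.pow_const _)
  have hWint : ∫⁻ x, W x = H * HU := by
    rw [hW]
    rw [lintegral_lintegral_swap hG]
    have inner2 : ∀ z : AddCircle (2:ℝ),
        ∫⁻ x, (‖h (x - z)‖₊ : ℝ≥0∞) * (‖u z‖₊ : ℝ≥0∞) ^ (2:ℝ)
          = H * (‖u z‖₊ : ℝ≥0∞) ^ (2:ℝ) := by
      intro z
      rw [lintegral_mul_const' _ _
        (ENNReal.rpow_ne_top_of_nonneg (by norm_num) ENNReal.coe_ne_top),
        lintegral_sub_right_eq_self (fun y => (‖h y‖₊ : ℝ≥0∞)) z, hHdef]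
    simp_rw [inner2]
    rw [lintegral_const_mul' _ _ hHlt.ne, hHU]
  have main : ∫⁻ x, (‖∫ z, h (x - z) * u z‖₊ : ℝ≥0∞) ^ (2:ℝ) ≤ H * (H * HU) := by
    calc ∫⁻ x, (‖∫ z, h (x - z) * u z‖₊ : ℝ≥0∞) ^ (2:ℝ)
        ≤ ∫⁻ x, H * W x := lintegral_mono pointwise
      _ = H * ∫⁻ x, W x := lintegral_const_mul' _ _ hHlt.ne
      _ = H * (H * HU) := by rw [hWint]
  rw [eLpNorm_eq_lintegral_rpow_enorm_toReal (by norm_num) (by norm_num)]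
  refine ENNReal.rpow_lt_top_of_nonneg (by norm_num) ?_
  rw [show ((2:ℝ≥0∞)).toReal = (2:ℝ) by norm_num]
  exact (main.trans_lt (ENNReal.mul_lt_top hHlt (ENNReal.mul_lt_top hHlt hHUlt))).ne

/-- Parseval's identity, together with summability. -/
lemma PCON.parseval_sq {f : AddCircle (2:ℝ) → ℂ} (hf : MemLp f 2 volume) :
    Summable (fun n : ℤ => ‖fourierCoeff f n‖ ^ 2) ∧
    ∑' n : ℤ, ‖fourierCoeff f n‖ ^ 2 = ∫ t, ‖f t‖ ^ 2 ∂AddCircle.haarAddCircle := by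
  have hf' : MemLp f 2 AddCircle.haarAddCircle := by
    rw [PCON.haar_eq]
    exact hf.smul_measure (by simp)
  set F := hf'.toLp f with hF
  have hFe : (F : AddCircle (2:ℝ) → ℂ) =ᵐ[AddCircle.haarAddCircle] f := hf'.coeFn_toLp
  have hcoe : ∀ n : ℤ, fourierCoeff (F : AddCircle (2:ℝ) → ℂ) n = fourierCoeff f n :=
    fun n => PCON.fourierCoeff_congr_haar hFe n
  have hpars := tsum_sq_fourierCoeff F
  have hsum : Summable (fun n : ℤ => ‖fourierCoeff (F : AddCircle (2:ℝ) → ℂ) n‖ ^ 2) := by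
    have hmem : Memℓp (⇑(fourierBasis.repr F)) 2 := lp.memℓp _
    have hs := hmem.summable (by norm_num : 0 < (2:ℝ≥0∞).toReal)
    have : ∀ n : ℤ, ‖(fourierBasis.repr F) n‖ ^ ((2:ℝ≥0∞).toReal)
        = ‖fourierCoeff (F : AddCircle (2:ℝ) → ℂ) n‖ ^ 2 := by
      intro n
      rw [fourierBasis_repr]
      rw [show ((2:ℝ≥0∞)).toReal = ((2:ℕ):ℝ) by norm_num, Real.rpow_natCast]
    simpa only [this] using hs
  have hint : ∫ t, ‖(F : AddCircle (2:ℝ) → ℂ) t‖ ^ 2 ∂AddCircle.haarAddCircle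
      = ∫ t, ‖f t‖ ^ 2 ∂AddCircle.haarAddCircle :=
    integral_congr_ae (hFe.mono fun x hx => by simp only [hx])
  constructor
  · simpa only [hcoe] using hsum
  · calc ∑' n : ℤ, ‖fourierCoeff f n‖ ^ 2
        = ∑' n : ℤ, ‖fourierCoeff (F : AddCircle (2:ℝ) → ℂ) n‖ ^ 2 := by simp_rw [hcoe]
      _ = ∫ t, ‖(F : AddCircle (2:ℝ) → ℂ) t‖ ^ 2 ∂AddCircle.haarAddCircle := hpars
      _ = ∫ t, ‖f t‖ ^ 2 ∂AddCircle.haarAddCircle := hint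

/-- Let `h` be an integrable function on the circle `ℝ/2ℤ` whose Fourier coefficients
are `ĥ(n) = (1/2)(1 + 0.0009 n²)^{−2}`.  Then for every `u ∈ L²`, the periodic
convolution `(h ⋆ u)(x) = ∫ h(x − z)u(z) dz` lies in `L²` with
`‖h ⋆ u‖_{L²} ≤ ‖u‖_{L²}`, and equality holds for nonzero constants `u`; hence the
induced operator on `L²(ℝ/2ℤ)` has norm exactly `1`. -/
theorem periodic_convolution_operator_norm_one
    (h : AddCircle (2:ℝ) → ℂ) (hh : Integrable h volume)
    (hcoeff : ∀ n : ℤ, fourierCoeff h n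
      = (((1 + 0.0009 * (n : ℝ) ^ 2) ^ (-2 : ℤ) / 2 : ℝ) : ℂ)) :
    (∀ u : AddCircle (2:ℝ) → ℂ, MemLp u 2 volume →
      MemLp (fun x => ∫ z, h (x - z) * u z) 2 volume
      ∧ eLpNorm (fun x => ∫ z, h (x - z) * u z) 2 volume ≤ eLpNorm u 2 volume)
    ∧ (∀ c : ℂ, c ≠ 0 →
        eLpNorm (fun x : AddCircle (2:ℝ) => ∫ z, h (x - z) * c) 2 volume
          = eLpNorm (fun _ : AddCircle (2:ℝ) => c) 2 volume) := by
    -- the multiplier is bounded by 1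
  have hmul : ∀ n : ℤ, ‖(2:ℂ) * fourierCoeff h n‖ ≤ 1 := by
    intro n
    rw [hcoeff n]
    have hbase : (1:ℝ) ≤ 1 + 0.0009 * (n:ℝ) ^ 2 := by nlinarith [sq_nonneg ((n:ℝ))]
    have hz : (1 + 0.0009 * (n:ℝ) ^ 2) ^ (-2:ℤ) = ((1 + 0.0009 * (n:ℝ) ^ 2) ^ 2)⁻¹ := by
      rw [zpow_neg]; norm_cast
    have hle1 : (1 + 0.0009 * (n:ℝ) ^ 2) ^ (-2:ℤ) ≤ 1 := by
      rw [hz]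
      exact inv_le_one_of_one_le₀ (by nlinarith)
    have hnn : (0:ℝ) ≤ (1 + 0.0009 * (n:ℝ) ^ 2) ^ (-2:ℤ) := by
      rw [hz]; positivity
    have : ((2:ℂ) * (((1 + 0.0009 * (n : ℝ) ^ 2) ^ (-2 : ℤ) / 2 : ℝ) : ℂ))
        = (((1 + 0.0009 * (n : ℝ) ^ 2) ^ (-2 : ℤ) : ℝ) : ℂ) := by
      push_cast
      ring
    rw [this, Complex.norm_real, Real.norm_eq_abs, abs_of_nonneg hnn]
    exact hle1
  -- value of the total integral of h
  have hint1 : ∫ x, h x = 1 := by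
    have h0 := PCON.coeff_eq h 0
    have : ∫ x, fourier (-(0:ℤ)) x * h x = ∫ x, h x := by
      refine integral_congr_ae (Filter.Eventually.of_forall fun x => ?_)
      simp
    rw [this] at h0
    rw [← h0, hcoeff 0]
    norm_num
  constructor
  · intro u hu
    have hui : Integrable u volume := hu.integrable (by norm_num)
    have hcm : MemLp (fun x => ∫ z, h (x - z) * u z) 2 volume := PCON.conv_mem hh hu
    refine ⟨hcm, ?_⟩
    set conv : AddCircle (2:ℝ) → ℂ := fun x => ∫ z, h (x - z) * u z with hconv
    have hcn : ∀ n : ℤ, fourierCoeff conv n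
        = ((2:ℂ) * fourierCoeff h n) * fourierCoeff u n := by
      intro n
      have hc := PCON.conv_coeff hh hui n
      have h2 : (2:ℂ) * fourierCoeff conv n
          = (2:ℂ) * (((2:ℂ) * fourierCoeff h n) * fourierCoeff u n) := by
        rw [hconv, hc]; ring
      exact mul_left_cancel₀ two_ne_zero h2
    have hterm : ∀ n : ℤ, ‖fourierCoeff conv n‖ ^ 2 ≤ ‖fourierCoeff u n‖ ^ 2 := by
      intro n
      rw [hcn n, norm_mul]
      have h1 : ‖(2:ℂ) * fourierCoeff h n‖ * ‖fourierCoeff u n‖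
          ≤ 1 * ‖fourierCoeff u n‖ :=
        mul_le_mul_of_nonneg_right (hmul n) (norm_nonneg _)
      rw [one_mul] at h1
      exact pow_le_pow_left₀ (by positivity) h1 2
    obtain ⟨Sc, pc⟩ := PCON.parseval_sq hcm
    obtain ⟨Su, pu⟩ := PCON.parseval_sq hu
    have inthaar : ∫ t, ‖conv t‖ ^ 2 ∂AddCircle.haarAddCircle
        ≤ ∫ t, ‖u t‖ ^ 2 ∂AddCircle.haarAddCircle := by
      rw [← pc, ← pu]
      exact Summable.tsum_le_tsum hterm Sc Su
    have intvol : ∫ t, ‖conv t‖ ^ 2 ≤ ∫ t, ‖u t‖ ^ 2 := by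
      rw [PCON.myInt (fun t => ‖conv t‖ ^ 2), PCON.myInt (fun t => ‖u t‖ ^ 2)]
      simp only [smul_eq_mul]
      exact mul_le_mul_of_nonneg_left inthaar (by norm_num)
    rw [hcm.eLpNorm_eq_integral_rpow_norm (by norm_num) (by norm_num),
      hu.eLpNorm_eq_integral_rpow_norm (by norm_num) (by norm_num)]
    apply ENNReal.ofReal_le_ofReal
    have hexp : ∀ r : ℝ, r ^ ((2:ℝ≥0∞)).toReal = r ^ 2 := by
      intro r
      rw [show ((2:ℝ≥0∞)).toReal = ((2:ℕ):ℝ) by norm_num, Real.rpow_natCast]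
    simp_rw [hexp]
    refine Real.rpow_le_rpow (integral_nonneg fun x => by positivity) intvol (by norm_num)
  · intro c _
    have hc : (fun x : AddCircle (2:ℝ) => ∫ z, h (x - z) * c) = fun _ => c := by
      funext x
      rw [integral_mul_const, integral_sub_left_eq_self h volume x, hint1, one_mul]
    rw [hc]
end
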